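/- Every linear map φ from d×d complex matrices to d'×d' complex matrices satisfies ‖φ‖_cb ≤ d·‖φ‖_{1→1}, where ‖φ‖_{1→1} = sup_{X≠0} ‖φ(X)‖_1/‖X‖_1 is the trace-norm-to-trace-norm operator norm and ‖φ‖_cb = sup_k sup_{X≠0} ‖(φ⊗id_k)(X)‖_1/‖X‖_1 is the completely bounded (diamond-type) 1→1 norm, where id_k is the identity map on k×k matrices. -/

import Mathlib

open Matrix BigOperators Kronecker ComplexOrder

/-- The old Mathlib `Matrix.PosSemidef.sqrt` (removed since), with its old definition. -/
noncomputable def Matrix.PosSemidef.sqrt {n : Type*} [Fintype n] [DecidableEq n] {A : Matrix n n ℂ}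
    (hA : A.PosSemidef) : Matrix n n ℂ :=
  hA.1.eigenvectorUnitary.1 * diagonal ((↑) ∘ (√·) ∘ hA.1.eigenvalues) *
    (star hA.1.eigenvectorUnitary : Matrix n n ℂ)

noncomputable def trNorm {n : Type*} [Fintype n] [DecidableEq n] (M : Matrix n n ℂ) : ℝ :=
  ((Matrix.posSemidef_conjTranspose_mul_self M).sqrt.trace).re

noncomputable def mlog {n : Type*} [Fintype n] [DecidableEq n] (M : Matrix n n ℂ) : Matrix n n ℂ :=
  if h : M.IsHermitian then
    (h.eigenvectorUnitary : Matrix n n ℂ) *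
      Matrix.diagonal (fun i => (Real.log (h.eigenvalues i) : ℂ)) *
      (star (h.eigenvectorUnitary : Matrix n n ℂ))
  else 0

noncomputable def vnEnt {n : Type*} [Fintype n] [DecidableEq n] (ρ : Matrix n n ℂ) : ℝ :=
  -(((ρ * mlog ρ).trace).re)

noncomputable def relEnt {n : Type*} [Fintype n] [DecidableEq n] (ρ σ : Matrix n n ℂ) : ℝ :=
  (((ρ * (mlog ρ - mlog σ)).trace).re)

def IsState {n : Type*} [Fintype n] (ρ : Matrix n n ℂ) : Prop := ρ.PosSemidef ∧ ρ.trace = 1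

noncomputable def ptraceL {α n : Type*} [Fintype α] (M : Matrix (α × n) (α × n) ℂ) : Matrix n n ℂ :=
  Matrix.of fun i j => ∑ a, M (a, i) (a, j)

noncomputable def ptraceR {α n : Type*} [Fintype n] (M : Matrix (α × n) (α × n) ℂ) : Matrix α α ℂ :=
  Matrix.of fun i j => ∑ c, M (i, c) (j, c)

noncomputable def amp {α γ δ : Type*} (Φ : Matrix γ γ ℂ → Matrix δ δ ℂ)
    (ρ : Matrix (α × γ) (α × γ) ℂ) : Matrix (α × δ) (α × δ) ℂ :=
  Matrix.of fun x y => Φ (Matrix.of fun c c' => ρ (x.1, c) (y.1, c')) x.2 y.2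

def IsCP {γ δ : Type*} [Fintype γ] [Fintype δ] (Φ : Matrix γ γ ℂ → Matrix δ δ ℂ) : Prop :=
  IsLinearMap ℂ Φ ∧ ∀ (k : ℕ) (ρ : Matrix (Fin k × γ) (Fin k × γ) ℂ), ρ.PosSemidef → (amp Φ ρ).PosSemidef

def IsTP {γ δ : Type*} [Fintype γ] [Fintype δ] (Φ : Matrix γ γ ℂ → Matrix δ δ ℂ) : Prop :=
  ∀ ρ, (Φ ρ).trace = ρ.trace

section tri
variable {α β γ : Type*} [Fintype α] [Fintype β] [Fintype γ]

noncomputable def mAB (ρ : Matrix ((α × β) × γ) ((α × β) × γ) ℂ) : Matrix (α × β) (α × β) ℂ := ptraceR ρ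
noncomputable def mA (ρ : Matrix ((α × β) × γ) ((α × β) × γ) ℂ) : Matrix α α ℂ := ptraceR (mAB ρ)
noncomputable def mB (ρ : Matrix ((α × β) × γ) ((α × β) × γ) ℂ) : Matrix β β ℂ := ptraceL (mAB ρ)
noncomputable def mBC (ρ : Matrix ((α × β) × γ) ((α × β) × γ) ℂ) : Matrix (β × γ) (β × γ) ℂ :=
  Matrix.of fun p q => ∑ a, ρ ((a, p.1), p.2) ((a, q.1), q.2)

noncomputable def cmi [DecidableEq α] [DecidableEq β] [DecidableEq γ]
    (ρ : Matrix ((α × β) × γ) ((α × β) × γ) ℂ) : ℝ :=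
  vnEnt (mAB ρ) + vnEnt (mBC ρ) - vnEnt (mB ρ) - vnEnt ρ

noncomputable def prodA_BC (ρ : Matrix ((α × β) × γ) ((α × β) × γ) ℂ) :
    Matrix ((α × β) × γ) ((α × β) × γ) ℂ :=
  Matrix.of fun x y => mA ρ x.1.1 y.1.1 * mBC ρ (x.1.2, x.2) (y.1.2, y.2)

noncomputable def prodA_B (ρ : Matrix ((α × β) × γ) ((α × β) × γ) ℂ) : Matrix (α × β) (α × β) ℂ :=
  Matrix.of fun x y => mA ρ x.1 y.1 * mB ρ x.2 y.2

noncomputable def tcmi [DecidableEq α] [DecidableEq β] [DecidableEq γ]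
    (ρ : Matrix ((α × β) × γ) ((α × β) × γ) ℂ) : ℝ :=
  trNorm (ρ - prodA_BC ρ) - trNorm (mAB ρ - prodA_B ρ)
end tri

/-- The `1→1` superoperator norm `sup_{X≠0} ‖φ(X)‖₁/‖X‖₁`. -/
noncomputable def norm11 {γ δ : Type*} [Fintype γ] [DecidableEq γ] [Fintype δ] [DecidableEq δ]
    (φ : Matrix γ γ ℂ → Matrix δ δ ℂ) : ℝ :=
  sSup {c | ∃ X : Matrix γ γ ℂ, X ≠ 0 ∧ c = trNorm (φ X) / trNorm X}

/-- The completely bounded `1→1` norm `sup_k sup_{X≠0} ‖(id_k ⊗ φ)(X)‖₁/‖X‖₁`. -/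
noncomputable def normCB {γ δ : Type*} [Fintype γ] [DecidableEq γ] [Fintype δ] [DecidableEq δ]
    (φ : Matrix γ γ ℂ → Matrix δ δ ℂ) : ℝ :=
  sSup {c | ∃ (k : ℕ) (X : Matrix (Fin k × γ) (Fin k × γ) ℂ),
    X ≠ 0 ∧ c = trNorm (amp φ X) / trNorm X}

section aux
variable {m : Type*} [Fintype m]

/-- squared euclidean norm of a vector -/
noncomputable def nsq (u : m → ℂ) : ℝ := ∑ c, Complex.normSq (u c)

lemma nsq_nonneg (u : m → ℂ) : 0 ≤ nsq u :=
  Finset.sum_nonneg fun _ _ => Complex.normSq_nonneg _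

lemma star_dot_self (u : m → ℂ) : star u ⬝ᵥ u = (nsq u : ℂ) := by
  simp only [dotProduct, Pi.star_apply, nsq, Complex.ofReal_sum]
  exact Finset.sum_congr rfl fun c _ => by
    rw [RCLike.star_def, Complex.normSq_eq_conj_mul_self]

/-- Cauchy–Schwarz for complex vectors, via dot product. -/
lemma cs_dot (u v : m → ℂ) :
    ‖star u ⬝ᵥ v‖ ≤ Real.sqrt (nsq u) * Real.sqrt (nsq v) := by
  have h1 : ‖star u ⬝ᵥ v‖ ≤ ∑ c, ‖u c‖ * ‖v c‖ := by
    refine (norm_sum_le _ _).trans (le_of_eq ?_)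
    refine Finset.sum_congr rfl fun c _ => ?_
    simp [_root_.map_mul]
  refine h1.trans ?_
  have h2 : (∑ c, ‖u c‖ * ‖v c‖) ^ 2 ≤ nsq u * nsq v := by
    refine (Finset.sum_mul_sq_le_sq_mul_sq _ _ _).trans (le_of_eq ?_)
    unfold nsq
    simp [Complex.sq_norm]
  calc ∑ c, ‖u c‖ * ‖v c‖
      ≤ Real.sqrt ((∑ c, ‖u c‖ * ‖v c‖) ^ 2) := by
        rw [Real.sqrt_sq (Finset.sum_nonneg fun c _ => mul_nonneg (norm_nonneg _) (norm_nonneg _))]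
    _ ≤ Real.sqrt (nsq u * nsq v) := Real.sqrt_le_sqrt h2
    _ = Real.sqrt (nsq u) * Real.sqrt (nsq v) := Real.sqrt_mul (nsq_nonneg u) _

end aux

section bessel
variable {m : Type*} [Fintype m] {n : Type*} [Fintype n]

lemma sum_dot {ι : Type*} (s : Finset ι) (f : ι → m → ℂ) (v : m → ℂ) :
    (∑ i ∈ s, f i) ⬝ᵥ v = ∑ i ∈ s, f i ⬝ᵥ v := by
  simp only [dotProduct, Finset.sum_apply, Finset.sum_mul]
  exact Finset.sum_comm

lemma dot_sum {ι : Type*} (s : Finset ι) (v : m → ℂ) (f : ι → m → ℂ) :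
    v ⬝ᵥ (∑ i ∈ s, f i) = ∑ i ∈ s, v ⬝ᵥ f i := by
  simp only [dotProduct, Finset.sum_apply, Finset.mul_sum]
  exact Finset.sum_comm

omit [Fintype m] in
lemma star_sum_smul (q : n → ℂ) (w : n → (m → ℂ)) :
    star (∑ i, q i • w i) = ∑ i, (starRingEnd ℂ) (q i) • star (w i) := by
  funext c
  simp [Finset.sum_apply, star_sum, _root_.map_mul]

lemma bessel [DecidableEq n] (w : n → (m → ℂ)) (ε : n → ℝ)
    (hw : ∀ i j, star (w i) ⬝ᵥ w j = if i = j then (ε i : ℂ) else 0)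
    (hε : ∀ i, ε i ≤ 1) (p : m → ℂ) :
    nsq (fun i => star (w i) ⬝ᵥ p) ≤ nsq p := by
  set q : n → ℂ := fun i => star (w i) ⬝ᵥ p with hq
  set S : ℝ := nsq q with hS
  have hS0 : 0 ≤ S := nsq_nonneg q
  set t : m → ℂ := ∑ i, q i • w i with ht
  have hstart : star t = ∑ i, (starRingEnd ℂ) (q i) • star (w i) := star_sum_smul q w
  have claim1 : star t ⬝ᵥ p = (S : ℂ) := by
    rw [hstart, sum_dot]
    simp only [smul_dotProduct, smul_eq_mul]
    rw [hS, nsq, Complex.ofReal_sum]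
    exact Finset.sum_congr rfl fun i _ => by
      rw [show star (w i) ⬝ᵥ p = q i from rfl, ← Complex.normSq_eq_conj_mul_self]
  have claim2 : nsq t ≤ S := by
    have h2 : star t ⬝ᵥ t = ((∑ i, Complex.normSq (q i) * ε i : ℝ) : ℂ) := by
      rw [hstart, sum_dot]
      push_cast
      refine Finset.sum_congr rfl fun i _ => ?_
      rw [show t = ∑ j, q j • w j from ht, dot_sum]
      simp only [dotProduct_smul, smul_eq_mul, smul_dotProduct]
      rw [Finset.sum_eq_single i]
      · rw [hw i i, if_pos rfl, mul_comm ((starRingEnd ℂ) (q i)) ((ε i : ℂ)), ← mul_assoc,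
          mul_comm (q i) ((ε i : ℂ)), mul_assoc, mul_comm (q i) _, ← Complex.normSq_eq_conj_mul_self]
        ring
      · intro j _ hj
        rw [hw i j, if_neg (fun h => hj h.symm)]
        ring
      · intro h; exact absurd (Finset.mem_univ i) h
    have h3 := star_dot_self t
    rw [h2] at h3
    have h4 : nsq t = ∑ i, Complex.normSq (q i) * ε i := by
      exact_mod_cast congrArg Complex.re h3.symm
    rw [h4, hS, nsq]
    refine Finset.sum_le_sum fun i _ => ?_
    calc Complex.normSq (q i) * ε i ≤ Complex.normSq (q i) * 1 :=
          mul_le_mul_of_nonneg_left (hε i) (Complex.normSq_nonneg _)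
      _ = _ := mul_one _
  have key : S ≤ Real.sqrt S * Real.sqrt (nsq p) := by
    have h3 : ‖star t ⬝ᵥ p‖ ≤ Real.sqrt (nsq t) * Real.sqrt (nsq p) := cs_dot t p
    rw [claim1, Complex.norm_of_nonneg hS0] at h3
    exact h3.trans (mul_le_mul_of_nonneg_right (Real.sqrt_le_sqrt claim2) (Real.sqrt_nonneg _))
  rcases eq_or_lt_of_le hS0 with h | h
  · rw [← h]; exact nsq_nonneg p
  · have hs : 0 < Real.sqrt S := Real.sqrt_pos.mpr h
    have h4 : Real.sqrt S * Real.sqrt S ≤ Real.sqrt S * Real.sqrt (nsq p) := by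
      rw [Real.mul_self_sqrt hS0]; exact key
    have h5 : Real.sqrt S ≤ Real.sqrt (nsq p) := le_of_mul_le_mul_left h4 hs
    calc S = Real.sqrt S * Real.sqrt S := (Real.mul_self_sqrt hS0).symm
      _ ≤ Real.sqrt (nsq p) * Real.sqrt (nsq p) :=
          mul_le_mul h5 h5 (Real.sqrt_nonneg _) (Real.sqrt_nonneg _)
      _ = nsq p := Real.mul_self_sqrt (nsq_nonneg p)

end bessel

section decomp
variable {n : Type*} [Fintype n] [DecidableEq n]

theorem decomp (X : Matrix n n ℂ) :
    ∃ (s : n → ℝ) (v w : n → (n → ℂ)),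
      (∀ i, 0 ≤ s i) ∧
      (∀ i j, star (v i) ⬝ᵥ v j = if i = j then 1 else 0) ∧
      (∀ i j, star (w i) ⬝ᵥ w j = if i = j ∧ s i ≠ 0 then 1 else 0) ∧
      (∀ c c', X c c' = ∑ i, (s i : ℂ) * (w i c * (starRingEnd ℂ) (v i c'))) ∧
      trNorm X = ∑ i, s i := by
  have hM := Matrix.posSemidef_conjTranspose_mul_self X
  set h : (Xᴴ * X).IsHermitian := hM.1 with hh
  set d : n → ℝ := h.eigenvalues with hd
  have hdnn : ∀ i, 0 ≤ d i := fun i => hM.eigenvalues_nonneg i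
  set s : n → ℝ := fun i => Real.sqrt (d i) with hs
  set v : n → (n → ℂ) := fun i => ⇑(h.eigenvectorBasis i) with hv
  set w : n → (n → ℂ) := fun i => if s i = 0 then 0 else ((s i : ℂ))⁻¹ • (X *ᵥ v i) with hw
  set V : Matrix n n ℂ := (h.eigenvectorUnitary : Matrix n n ℂ) with hV
  have hVapp : ∀ i c, V c i = v i c := fun i c => h.eigenvectorUnitary_apply c i
  have hU1 : V * star V = 1 := Matrix.mem_unitaryGroup_iff.mp h.eigenvectorUnitary.2
  have hU2 : star V * V = 1 := Matrix.mem_unitaryGroup_iff'.mp h.eigenvectorUnitary.2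
  -- orthonormality of v
  have hvorth : ∀ i j, star (v i) ⬝ᵥ v j = if i = j then 1 else 0 := by
    intro i j
    have := congrFun (congrFun hU2 i) j
    simp only [Matrix.mul_apply, Matrix.star_apply, Matrix.one_apply] at this
    rw [← this]
    simp only [dotProduct, Pi.star_apply]
    exact Finset.sum_congr rfl fun c _ => by rw [hVapp i c, hVapp j c]
  -- key inner products of X *ᵥ v i
  have key : ∀ i j, star (X *ᵥ v i) ⬝ᵥ (X *ᵥ v j) = if i = j then (d j : ℂ) else 0 := by
    intro i j
    have hMv : (Xᴴ * X) *ᵥ v j = (d j : ℝ) • v j := by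
      have := h.mulVec_eigenvectorBasis j
      exact this
    calc star (X *ᵥ v i) ⬝ᵥ (X *ᵥ v j)
        = (star (v i) ᵥ* Xᴴ) ⬝ᵥ (X *ᵥ v j) := by rw [Matrix.star_mulVec]
      _ = star (v i) ⬝ᵥ (Xᴴ *ᵥ (X *ᵥ v j)) := (Matrix.dotProduct_mulVec _ _ _).symm
      _ = star (v i) ⬝ᵥ ((Xᴴ * X) *ᵥ v j) := by rw [Matrix.mulVec_mulVec]
      _ = star (v i) ⬝ᵥ ((d j : ℝ) • v j) := by rw [hMv]
      _ = (d j : ℝ) • (star (v i) ⬝ᵥ v j) := dotProduct_smul _ _ _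
      _ = if i = j then (d j : ℂ) else 0 := by
          rw [hvorth i j]
          split_ifs <;> simp
  have hs0d : ∀ i, s i = 0 ↔ d i = 0 := by
    intro i
    constructor
    · intro hsi
      have := Real.sqrt_eq_zero (hdnn i) |>.mp hsi
      exact this
    · intro hdi; rw [hs]; simp [hdi]
  have hXv0 : ∀ i, s i = 0 → X *ᵥ v i = 0 := by
    intro i hsi
    have h0 : star (X *ᵥ v i) ⬝ᵥ (X *ᵥ v i) = 0 := by
      rw [key i i, if_pos rfl]
      exact_mod_cast (hs0d i).mp hsi
    exact dotProduct_star_self_eq_zero.mp h0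
  have hXv : ∀ i, X *ᵥ v i = (s i : ℂ) • w i := by
    intro i
    rw [hw]
    by_cases hsi : s i = 0
    · simp only [hsi, if_pos]
      rw [hXv0 i hsi]
      simp
    · simp only [hsi, if_false, dite_eq_ite, ite_false]
      rw [smul_smul, mul_inv_cancel₀ (by exact_mod_cast hsi), one_smul]
  -- orthogonality of w
  have hworth : ∀ i j, star (w i) ⬝ᵥ w j = if i = j ∧ s i ≠ 0 then 1 else 0 := by
    intro i j
    by_cases hsi : s i = 0
    · rw [hw]; simp only [hsi, if_pos rfl]
      simp [hsi]
    · by_cases hsj : s j = 0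
      · rw [hw]; simp only [if_neg hsi, hsj, if_pos rfl]
        have : i ≠ j := fun hij => hsi (hij ▸ hsj)
        simp [this, hsi]
      · rw [hw]; simp only [if_neg hsi, if_neg hsj]
        rw [star_smul, smul_dotProduct, dotProduct_smul, key i j]
        rw [star_inv₀, RCLike.star_def, Complex.conj_ofReal]
        by_cases hij : i = j
        · subst hij
          rw [if_pos rfl, if_pos ⟨rfl, hsi⟩]
          have hdi : (d i : ℂ) = (s i : ℂ) * (s i : ℂ) := by
            rw [hs]
            norm_cast
            rw [← Real.mul_self_sqrt (hdnn i)]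
          rw [smul_eq_mul, smul_eq_mul, hdi]
          field_simp
        · rw [if_neg hij, if_neg (fun hc => hij hc.1)]
          simp
  refine ⟨s, v, w, fun i => Real.sqrt_nonneg _, hvorth, hworth, ?_, ?_⟩
  · -- decomposition of entries
    intro c c'
    have hX1 : X = X * V * star V := by rw [mul_assoc, hU1, mul_one]
    calc X c c' = (X * V * star V) c c' := by rw [← hX1]
      _ = ∑ i, (X * V) c i * star V i c' := Matrix.mul_apply
      _ = ∑ i, (s i : ℂ) * (w i c * (starRingEnd ℂ) (v i c')) := by
          refine Finset.sum_congr rfl fun i _ => ?_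
          have h1 : (X * V) c i = (X *ᵥ v i) c := by
            rw [Matrix.mul_apply, Matrix.mulVec]
            simp only [dotProduct]
            exact Finset.sum_congr rfl fun e _ => by rw [hVapp i e]
          rw [h1, hXv i, Pi.smul_apply, smul_eq_mul, Matrix.star_apply, hVapp i c',
            RCLike.star_def]
          ring
  · -- trace identity
    show ((hM.sqrt).trace).re = ∑ i, s i
    have hsq : hM.sqrt = V * Matrix.diagonal ((↑) ∘ Real.sqrt ∘ d) * star V := rfl
    rw [hsq]
    rw [Matrix.trace_mul_cycle, hU2, one_mul, Matrix.trace_diagonal]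
    rw [Complex.re_sum]
    exact Finset.sum_congr rfl fun i _ => rfl

end decomp

section dual
variable {n : Type*} [Fintype n] [DecidableEq n]

lemma trace_vmv_mul (a b c e : n → ℂ) :
    ((Matrix.vecMulVec a b) * (Matrix.vecMulVec c e)).trace = (b ⬝ᵥ c) * (e ⬝ᵥ a) := by
  have hrhs : (b ⬝ᵥ c) * (e ⬝ᵥ a) = ∑ x, ∑ z, (b z * c z) * (e x * a x) := by
    rw [dotProduct, dotProduct, Finset.sum_mul]
    simp only [Finset.mul_sum]
    exact Finset.sum_comm
  rw [hrhs]
  simp only [Matrix.trace, Matrix.diag, Matrix.mul_apply, Matrix.vecMulVec_apply]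
  exact Finset.sum_congr rfl fun x _ => Finset.sum_congr rfl fun z _ => by ring

lemma matrix_eq_sum_rank_one {B : Matrix n n ℂ} {t : n → ℝ} {v w : n → (n → ℂ)}
    (hdec : ∀ c c', B c c' = ∑ i, (t i : ℂ) * (w i c * (starRingEnd ℂ) (v i c'))) :
    B = ∑ i, (t i : ℂ) • Matrix.vecMulVec (w i) (star (v i)) := by
  ext c c'
  rw [hdec c c']
  simp only [Finset.sum_apply, Matrix.sum_apply, Matrix.smul_apply, Matrix.vecMulVec_apply,
    Pi.star_apply, smul_eq_mul, RCLike.star_def]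

theorem dualA (X : Matrix n n ℂ) :
    ∃ A : Matrix n n ℂ,
      ((A * X).trace).re = trNorm X ∧
      ∀ p q : n → ℂ, ‖(A * Matrix.vecMulVec p (star q)).trace‖ ≤
        Real.sqrt (nsq p) * Real.sqrt (nsq q) := by
  obtain ⟨s, v, w, hs, hv, hw, hdec, htr⟩ := decomp X
  set A : Matrix n n ℂ := ∑ i, Matrix.vecMulVec (v i) (star (w i)) with hA
  have hXsum := matrix_eq_sum_rank_one hdec
  refine ⟨A, ?_, ?_⟩
  · have : (A * X).trace = ((∑ i, s i : ℝ) : ℂ) := by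
      rw [hXsum, hA, Finset.sum_mul]
      rw [Matrix.trace_sum]
      push_cast
      refine Finset.sum_congr rfl fun i _ => ?_
      rw [Finset.mul_sum, Matrix.trace_sum]
      rw [Finset.sum_eq_single i]
      · rw [Matrix.mul_smul, Matrix.trace_smul, trace_vmv_mul, hw i i, hv i i, if_pos rfl]
        by_cases hsi : s i = 0
        · simp [hsi]
        · rw [if_pos ⟨rfl, hsi⟩]
          simp
      · intro j _ hj
        rw [Matrix.mul_smul, Matrix.trace_smul, trace_vmv_mul, hw i j, hv j i,
          if_neg (fun hc => hj hc.1.symm), if_neg (fun hc => hj hc)]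
        simp
      · intro hcon; exact absurd (Finset.mem_univ i) hcon
    rw [this, htr, Complex.ofReal_re]
  · intro p q
    have hexp : (A * Matrix.vecMulVec p (star q)).trace
        = ∑ i, (star (w i) ⬝ᵥ p) * (star q ⬝ᵥ v i) := by
      rw [hA, Finset.sum_mul, Matrix.trace_sum]
      exact Finset.sum_congr rfl fun i _ => trace_vmv_mul _ _ _ _
    rw [hexp]
    set α : n → ℂ := fun i => star (w i) ⬝ᵥ p with hα
    set β : n → ℂ := fun i => star q ⬝ᵥ v i with hβ
    have hform : ∑ i, α i * β i = star (fun i => (starRingEnd ℂ) (α i)) ⬝ᵥ β := by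
      simp only [dotProduct, Pi.star_apply, RCLike.star_def, Complex.conj_conj]
    rw [hform]
    refine (cs_dot _ _).trans ?_
    have h1 : nsq (fun i => (starRingEnd ℂ) (α i)) = nsq α := by
      unfold nsq; exact Finset.sum_congr rfl fun i _ => Complex.normSq_conj _
    have h2 : nsq α ≤ nsq p := by
      refine bessel w (fun i => if s i ≠ 0 then 1 else 0) ?_ (fun i => by split_ifs <;> norm_num) p
      intro i j
      rw [hw i j]
      by_cases hij : i = j
      · subst hij
        by_cases hsi : s i = 0 <;> simp [hsi]
      · simp [hij]
    have h3 : nsq β ≤ nsq q := by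
      have hβ2 : ∀ i, β i = (starRingEnd ℂ) (star (v i) ⬝ᵥ q) := by
        intro i
        simp only [hβ, dotProduct, Pi.star_apply, RCLike.star_def, map_sum, _root_.map_mul,
          Complex.conj_conj]
        exact Finset.sum_congr rfl fun c _ => by ring
      have : nsq β = nsq (fun i => star (v i) ⬝ᵥ q) := by
        unfold nsq
        exact Finset.sum_congr rfl fun i _ => by rw [hβ2 i, Complex.normSq_conj]
      rw [this]
      exact bessel v (fun _ => 1) (by intro i j; rw [hv i j]; split_ifs <;> simp)
        (fun _ => le_refl 1) q
    calc Real.sqrt (nsq fun i => (starRingEnd ℂ) (α i)) * Real.sqrt (nsq β)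
        ≤ Real.sqrt (nsq p) * Real.sqrt (nsq q) := by
          rw [h1]
          exact mul_le_mul (Real.sqrt_le_sqrt h2) (Real.sqrt_le_sqrt h3) (Real.sqrt_nonneg _)
            (Real.sqrt_nonneg _)

lemma nsq_le_one_of_orth {s : n → ℝ} {w : n → (n → ℂ)}
    (hw : ∀ i j, star (w i) ⬝ᵥ w j = if i = j ∧ s i ≠ 0 then 1 else 0) (i : n) :
    nsq (w i) ≤ 1 := by
  have h := hw i i
  have h2 := star_dot_self (w i)
  rw [h] at h2
  have : (nsq (w i) : ℂ) = if i = i ∧ s i ≠ 0 then 1 else 0 := h2.symm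
  by_cases hsi : s i = 0
  · rw [if_neg (fun hc => hc.2 hsi)] at this
    exact_mod_cast le_of_eq (by exact_mod_cast this) |>.trans zero_le_one
  · rw [if_pos ⟨rfl, hsi⟩] at this
    exact le_of_eq (by exact_mod_cast this)

lemma trace_abs_le_trNorm {A : Matrix n n ℂ}
    (hA : ∀ p q : n → ℂ, ‖(A * Matrix.vecMulVec p (star q)).trace‖ ≤
      Real.sqrt (nsq p) * Real.sqrt (nsq q))
    (B : Matrix n n ℂ) : ‖(A * B).trace‖ ≤ trNorm B := by
  obtain ⟨t, v, w, ht, hv, hw, hdec, htr⟩ := decomp B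
  rw [htr]
  conv_lhs => rw [matrix_eq_sum_rank_one hdec, Finset.mul_sum, Matrix.trace_sum]
  refine (norm_sum_le _ _).trans ?_
  refine Finset.sum_le_sum fun j _ => ?_
  rw [Matrix.mul_smul, Matrix.trace_smul]
  rw [smul_eq_mul, norm_mul, Complex.norm_of_nonneg (ht j)]
  calc t j * ‖(A * Matrix.vecMulVec (w j) (star (v j))).trace‖
      ≤ t j * (Real.sqrt (nsq (w j)) * Real.sqrt (nsq (v j))) :=
        mul_le_mul_of_nonneg_left (hA _ _) (ht j)
    _ ≤ t j * (1 * 1) := by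
        refine mul_le_mul_of_nonneg_left ?_ (ht j)
        have h1 : Real.sqrt (nsq (w j)) ≤ 1 := by
          rw [show (1:ℝ) = Real.sqrt 1 by simp]
          exact Real.sqrt_le_sqrt (nsq_le_one_of_orth hw j)
        have h2 : Real.sqrt (nsq (v j)) ≤ 1 := by
          rw [show (1:ℝ) = Real.sqrt 1 by simp]
          refine Real.sqrt_le_sqrt ?_
          have hvv := star_dot_self (v j)
          rw [hv j j, if_pos rfl] at hvv
          exact le_of_eq (by exact_mod_cast hvv.symm)
        exact mul_le_mul h1 h2 (Real.sqrt_nonneg _) zero_le_one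
    _ = t j := by ring

lemma trNorm_nonneg (B : Matrix n n ℂ) : 0 ≤ trNorm B := by
  obtain ⟨t, v, w, ht, hv, hw, hdec, htr⟩ := decomp B
  rw [htr]
  exact Finset.sum_nonneg fun i _ => ht i

lemma abs_entry_le_trNorm (B : Matrix n n ℂ) (c c' : n) :
    ‖B c c'‖ ≤ trNorm B := by
  obtain ⟨t, v, w, ht, hv, hw, hdec, htr⟩ := decomp B
  rw [hdec c c', htr]
  refine (norm_sum_le _ _).trans ?_
  refine Finset.sum_le_sum fun i _ => ?_
  rw [norm_mul, norm_mul, Complex.norm_of_nonneg (ht i),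
    Complex.norm_conj]
  have hco : ∀ (u : n → ℂ) (c : n), nsq u ≤ 1 → ‖u c‖ ≤ 1 := by
    intro u c hu
    have h1 : Complex.normSq (u c) ≤ 1 := by
      refine le_trans ?_ hu
      exact Finset.single_le_sum (fun j (_ : j ∈ Finset.univ) => Complex.normSq_nonneg (u j))
        (Finset.mem_univ c)
    have : ‖u c‖ = Real.sqrt (Complex.normSq (u c)) := Complex.norm_def _
    rw [this, show (1:ℝ) = Real.sqrt 1 by simp]
    exact Real.sqrt_le_sqrt h1
  have hw1 : ‖w i c‖ ≤ 1 := hco _ _ (nsq_le_one_of_orth hw i)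
  have hv1 : ‖v i c'‖ ≤ 1 := by
    refine hco _ _ ?_
    have hvv := star_dot_self (v i)
    rw [hv i i, if_pos rfl] at hvv
    exact le_of_eq (by exact_mod_cast hvv.symm)
  calc t i * (‖w i c‖ * ‖v i c'‖)
      ≤ t i * (1 * 1) := mul_le_mul_of_nonneg_left
        (mul_le_mul hw1 hv1 (norm_nonneg _) zero_le_one) (ht i)
    _ = t i := by ring

lemma trNorm_pos_of_ne_zero {B : Matrix n n ℂ} (hB : B ≠ 0) : 0 < trNorm B := by
  obtain ⟨t, v, w, ht, hv, hw, hdec, htr⟩ := decomp B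
  rcases lt_or_eq_of_le (Finset.sum_nonneg fun (i : n) (_ : i ∈ Finset.univ) => ht i) with h | h
  · rw [htr]; exact h
  · exfalso
    apply hB
    have hall : ∀ i, t i = 0 := fun i =>
      (Finset.sum_eq_zero_iff_of_nonneg (fun j _ => ht j)).mp h.symm i (Finset.mem_univ i)
    ext c c'
    rw [hdec c c']
    simp [hall]

end dual

section stdb
variable {n : Type*} [Fintype n] [DecidableEq n]

lemma stdBasisMatrix_conjT (c c' : n) :
    (Matrix.single c c' (1:ℂ))ᴴ = Matrix.single c' c (1:ℂ) := by
  ext i j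
  simp only [Matrix.conjTranspose_apply, Matrix.single]
  by_cases h : c = j ∧ c' = i <;> simp [Matrix.of_apply, and_comm] <;> aesop

lemma trNorm_stdBasisMatrix (c c' : n) : trNorm (Matrix.single c c' (1:ℂ)) = 1 := by
  set E := Matrix.single c c' (1:ℂ) with hE
  set F := Matrix.single c' c' (1:ℂ) with hF
  have hM : (Eᴴ * E).PosSemidef := Matrix.posSemidef_conjTranspose_mul_self E
  have hEE : Eᴴ * E = F := by
    rw [hE, stdBasisMatrix_conjT, Matrix.single_mul_single_same, one_mul]
  show ((hM.sqrt).trace).re = 1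
  set h := hM.1 with hh
  have hFF : (Eᴴ * E) * (Eᴴ * E) = Eᴴ * E := by
    rw [hEE, hF, Matrix.single_mul_single_same, one_mul]
  have hlam : ∀ i, h.eigenvalues i = 0 ∨ h.eigenvalues i = 1 := by
    intro i
    have hv := h.mulVec_eigenvectorBasis i
    have h2 := congrArg (fun x => (Eᴴ * E) *ᵥ x) hv
    simp only at h2
    rw [Matrix.mulVec_mulVec, hFF, hv, Matrix.mulVec_smul, hv, smul_smul] at h2
    have hne : ⇑(h.eigenvectorBasis i) ≠ 0 := fun h0 =>
      h.eigenvectorBasis.orthonormal.ne_zero i (by simpa using h0)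
    have h3 : (h.eigenvalues i * h.eigenvalues i - h.eigenvalues i) • ⇑(h.eigenvectorBasis i) = 0 := by
      rw [sub_smul, ← h2, sub_self]
    rcases smul_eq_zero.mp h3 with h4 | h4
    · have h5 : h.eigenvalues i * (h.eigenvalues i - 1) = 0 := by linarith
      rcases mul_eq_zero.mp h5 with h6 | h6
      · exact Or.inl h6
      · exact Or.inr (by linarith)
    · exact absurd h4 hne
  have hU2 : star (h.eigenvectorUnitary : Matrix n n ℂ) * (h.eigenvectorUnitary : Matrix n n ℂ) = 1 :=
    Matrix.mem_unitaryGroup_iff'.mp h.eigenvectorUnitary.2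
  have ht1 : (Eᴴ * E).trace = 1 := by
    rw [hEE, hF]
    simp
  have htr := h.trace_eq_sum_eigenvalues.symm.trans ht1
  have hsq : hM.sqrt = (h.eigenvectorUnitary : Matrix n n ℂ) *
      Matrix.diagonal ((↑) ∘ Real.sqrt ∘ h.eigenvalues) * star (h.eigenvectorUnitary : Matrix n n ℂ) := rfl
  rw [hsq, Matrix.trace_mul_cycle, hU2, one_mul, Matrix.trace_diagonal, Complex.re_sum]
  have : ∑ i, h.eigenvalues i = 1 := by
    have := congrArg Complex.re htr
    simpa [Complex.re_sum] using this
  rw [← this]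
  refine Finset.sum_congr rfl fun i _ => ?_
  rcases hlam i with h0 | h0 <;> simp [h0]

end stdb


section normfacts
variable {γ δ : Type*} [Fintype γ] [DecidableEq γ] [Fintype δ] [DecidableEq δ]

lemma stdBasisMatrix_smul_one (Z : Matrix γ γ ℂ) (i j : γ) :
    Matrix.single i j (Z i j) = Z i j • Matrix.single i j (1:ℂ) := by
  ext a b
  simp only [Matrix.single, Matrix.smul_apply, Matrix.of_apply, smul_eq_mul]
  split_ifs <;> simp

lemma phi_apply_le (φ : Matrix γ γ ℂ →ₗ[ℂ] Matrix δ δ ℂ) (Z : Matrix γ γ ℂ) :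
    trNorm (φ Z) ≤
      (∑ p : γ × γ, trNorm (φ (Matrix.single p.1 p.2 (1:ℂ)))) * trNorm Z := by
  obtain ⟨A, hA1, hA2⟩ := dualA (φ Z)
  rw [← hA1]
  have hZ : φ Z = ∑ p : γ × γ, Z p.1 p.2 • φ (Matrix.single p.1 p.2 (1:ℂ)) := by
    conv_lhs => rw [Matrix.matrix_eq_sum_single Z]
    rw [← Finset.sum_product']
    rw [map_sum]
    refine Finset.sum_congr rfl fun p _ => ?_
    rw [stdBasisMatrix_smul_one]
    exact map_smul φ _ _
  calc ((A * φ Z).trace).re ≤ ‖(A * φ Z).trace‖ := Complex.re_le_norm _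
    _ ≤ ∑ p : γ × γ, trNorm (φ (Matrix.single p.1 p.2 (1:ℂ))) * trNorm Z := by
        rw [hZ, Finset.mul_sum, Matrix.trace_sum]
        refine (norm_sum_le _ _).trans ?_
        refine Finset.sum_le_sum fun p _ => ?_
        rw [Matrix.mul_smul, Matrix.trace_smul, smul_eq_mul, norm_mul]
        calc ‖Z p.1 p.2‖ * ‖(A * φ (Matrix.single p.1 p.2 1)).trace‖
            ≤ trNorm Z * trNorm (φ (Matrix.single p.1 p.2 1)) :=
              mul_le_mul (abs_entry_le_trNorm Z p.1 p.2) (trace_abs_le_trNorm hA2 _)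
                (norm_nonneg _) (trNorm_nonneg _)
          _ = trNorm (φ (Matrix.single p.1 p.2 1)) * trNorm Z := mul_comm _ _
    _ = _ := (Finset.sum_mul _ _ _).symm

lemma norm11_bddAbove (φ : Matrix γ γ ℂ →ₗ[ℂ] Matrix δ δ ℂ) :
    BddAbove {c | ∃ X : Matrix γ γ ℂ, X ≠ 0 ∧ c = trNorm (φ X) / trNorm X} := by
  refine ⟨∑ p : γ × γ, trNorm (φ (Matrix.single p.1 p.2 (1:ℂ))), ?_⟩
  rintro x ⟨X, hX, rfl⟩
  rw [div_le_iff₀ (trNorm_pos_of_ne_zero hX)]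
  exact phi_apply_le φ X

lemma norm11_nonneg (φ : Matrix γ γ ℂ →ₗ[ℂ] Matrix δ δ ℂ) : 0 ≤ norm11 ⇑φ := by
  refine Real.sSup_nonneg fun x hx => ?_
  obtain ⟨X, hX, rfl⟩ := hx
  exact div_nonneg (trNorm_nonneg _) (trNorm_nonneg _)

lemma trNorm_phi_std_le (φ : Matrix γ γ ℂ →ₗ[ℂ] Matrix δ δ ℂ) (c c' : γ) :
    trNorm (φ (Matrix.single c c' (1:ℂ))) ≤ norm11 ⇑φ := by
  refine le_csSup (norm11_bddAbove φ) ?_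
  refine ⟨Matrix.single c c' (1:ℂ), ?_, ?_⟩
  · intro h
    have := congrFun (congrFun h c) c'
    simp at this
  · rw [trNorm_stdBasisMatrix, div_one]

end normfacts


section mainbound
variable {γ δ : Type*} [Fintype γ] [DecidableEq γ] [Fintype δ] [DecidableEq δ]

lemma sqrt_sum_le {g : γ → ℝ} (hg : ∀ c, 0 ≤ g c) (hg1 : ∑ c, g c ≤ 1) :
    ∑ c, Real.sqrt (g c) ≤ Real.sqrt (Fintype.card γ) := by
  have h1 : (∑ c, Real.sqrt (g c) * 1) ^ 2 ≤ (∑ c, Real.sqrt (g c) ^ 2) * ∑ c : γ, (1:ℝ) ^ 2 :=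
    Finset.sum_mul_sq_le_sq_mul_sq _ _ _
  simp only [mul_one, one_pow] at h1
  have h2 : ∑ c, Real.sqrt (g c) ^ 2 = ∑ c, g c := by
    exact Finset.sum_congr rfl fun c _ => Real.sq_sqrt (hg c)
  have h3 : (∑ c : γ, (1:ℝ)) = Fintype.card γ := by simp
  rw [h2, h3] at h1
  have h4 : (∑ c, Real.sqrt (g c)) ^ 2 ≤ Fintype.card γ := by
    refine h1.trans ?_
    calc (∑ c, g c) * (Fintype.card γ : ℝ) ≤ 1 * (Fintype.card γ : ℝ) :=
          mul_le_mul_of_nonneg_right hg1 (Nat.cast_nonneg _)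
      _ = _ := one_mul _
  calc ∑ c, Real.sqrt (g c) = Real.sqrt ((∑ c, Real.sqrt (g c)) ^ 2) :=
        (Real.sqrt_sq (Finset.sum_nonneg fun c _ => Real.sqrt_nonneg _)).symm
    _ ≤ Real.sqrt (Fintype.card γ) := Real.sqrt_le_sqrt h4

lemma main_bound [Nonempty γ] (φ : Matrix γ γ ℂ →ₗ[ℂ] Matrix δ δ ℂ) (k : ℕ)
    (X : Matrix (Fin k × γ) (Fin k × γ) ℂ) :
    trNorm (amp ⇑φ X) ≤ (Fintype.card γ : ℝ) * norm11 ⇑φ * trNorm X := by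
  set N := norm11 ⇑φ with hN
  have hN0 : 0 ≤ N := norm11_nonneg φ
  obtain ⟨s, v, w, hs, hvo, hwo, hdec, htr⟩ := decomp X
  choose t vv ww ht hvvo hwwo hdecB htrB using
    fun (c c' : γ) => decomp (φ (Matrix.single c c' (1:ℂ)))
  obtain ⟨A, hA1, hA2⟩ := dualA (amp ⇑φ X)
  set P : ((Fin k × γ) × γ × γ × δ) → (Fin k × δ → ℂ) :=
    fun m ae => w m.1 (ae.1, m.2.1) * ww m.2.1 m.2.2.1 m.2.2.2 ae.2 with hP
  set Q : ((Fin k × γ) × γ × γ × δ) → (Fin k × δ → ℂ) :=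
    fun m bf => v m.1 (bf.1, m.2.2.1) * vv m.2.1 m.2.2.1 m.2.2.2 bf.2 with hQ
  set r : ((Fin k × γ) × γ × γ × δ) → ℝ :=
    fun m => s m.1 * t m.2.1 m.2.2.1 m.2.2.2 with hr
  have hampdec : amp ⇑φ X =
      ∑ m : (Fin k × γ) × γ × γ × δ, (r m : ℂ) • Matrix.vecMulVec (P m) (star (Q m)) := by
    ext ⟨a, e⟩ ⟨b, f⟩
    have hinner : Matrix.of (fun c c' => X (a,c) (b,c')) =
        ∑ p : γ × γ, (X (a,p.1) (b,p.2)) • Matrix.single p.1 p.2 (1:ℂ) := by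
      conv_lhs => rw [Matrix.matrix_eq_sum_single (Matrix.of fun c c' => X (a,c) (b,c'))]
      rw [← Finset.sum_product']
      refine Finset.sum_congr rfl fun p _ => ?_
      rw [stdBasisMatrix_smul_one (Matrix.of fun c c' => X (a,c) (b,c')) p.1 p.2]
      rfl
    have hL : amp ⇑φ X (a,e) (b,f) =
        ∑ c : γ, ∑ c' : γ, X (a,c) (b,c') * (φ (Matrix.single c c' (1:ℂ))) e f := by
      show φ (Matrix.of fun c c' => X (a,c) (b,c')) e f = _
      rw [hinner, map_sum]
      rw [Matrix.sum_apply]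
      rw [Fintype.sum_prod_type]
      refine Finset.sum_congr rfl fun c _ => Finset.sum_congr rfl fun c' _ => ?_
      simp only [LinearMap.map_smul, Matrix.smul_apply, smul_eq_mul]
    rw [hL]
    rw [Matrix.sum_apply]
    have hR : ∀ m : (Fin k × γ) × γ × γ × δ,
        ((r m : ℂ) • Matrix.vecMulVec (P m) (star (Q m))) (a,e) (b,f)
        = (r m : ℂ) * (P m (a,e) * (starRingEnd ℂ) (Q m (b,f))) := by
      intro m
      rw [Matrix.smul_apply, Matrix.vecMulVec_apply, smul_eq_mul]
      rfl
    simp only [hR]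
    rw [Fintype.sum_prod_type]
    have hswap : ∀ (F : (Fin k × γ) → γ → γ → δ → ℂ),
        ∑ c : γ, ∑ c' : γ, ∑ i : Fin k × γ, ∑ j : δ, F i c c' j
        = ∑ i : Fin k × γ, ∑ c : γ, ∑ c' : γ, ∑ j : δ, F i c c' j := by
      intro F
      have h1 : ∀ c : γ, ∑ c' : γ, ∑ i : Fin k × γ, ∑ j : δ, F i c c' j
          = ∑ i : Fin k × γ, ∑ c' : γ, ∑ j : δ, F i c c' j := fun c => Finset.sum_comm
      rw [Finset.sum_congr rfl fun c _ => h1 c]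
      exact Finset.sum_comm
    have hLexp : ∑ c : γ, ∑ c' : γ, X (a,c) (b,c') * (φ (Matrix.single c c' (1:ℂ))) e f
        = ∑ c : γ, ∑ c' : γ, ∑ i : Fin k × γ, ∑ j : δ,
            ((s i : ℂ) * (w i (a,c) * (starRingEnd ℂ) (v i (b,c'))))
            * ((t c c' j : ℂ) * (ww c c' j e * (starRingEnd ℂ) (vv c c' j f))) := by
      refine Finset.sum_congr rfl fun c _ => Finset.sum_congr rfl fun c' _ => ?_
      rw [hdec (a,c) (b,c'), hdecB c c' e f]
      exact Finset.sum_mul_sum _ _ _ _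
    rw [hLexp, hswap]
    refine Finset.sum_congr rfl fun i _ => ?_
    rw [Fintype.sum_prod_type]
    refine Finset.sum_congr rfl fun c _ => ?_
    rw [Fintype.sum_prod_type]
    refine Finset.sum_congr rfl fun c' _ => Finset.sum_congr rfl fun j _ => ?_
    rw [hP, hQ, hr]
    push_cast
    simp only [_root_.map_mul]
    ring
  -- now the numeric estimate
  set W : (Fin k × γ) → γ → ℝ := fun i c => ∑ a : Fin k, Complex.normSq (w i (a,c)) with hW
  set Vq : (Fin k × γ) → γ → ℝ := fun i c' => ∑ b : Fin k, Complex.normSq (v i (b,c')) with hVq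
  have hWnn : ∀ i c, 0 ≤ W i c := fun i c =>
    Finset.sum_nonneg fun a _ => Complex.normSq_nonneg _
  have hVnn : ∀ i c, 0 ≤ Vq i c := fun i c =>
    Finset.sum_nonneg fun a _ => Complex.normSq_nonneg _
  have hWsum : ∀ i, ∑ c, W i c ≤ 1 := by
    intro i
    have : ∑ c, W i c = nsq (w i) := by
      rw [nsq, Fintype.sum_prod_type]
      exact Finset.sum_comm
    rw [this]
    exact nsq_le_one_of_orth hwo i
  have hVsum : ∀ i, ∑ c, Vq i c ≤ 1 := by
    intro i
    have h1 : ∑ c, Vq i c = nsq (v i) := by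
      rw [nsq, Fintype.sum_prod_type]
      exact Finset.sum_comm
    rw [h1]
    have hvv2 := star_dot_self (v i)
    rw [hvo i i, if_pos rfl] at hvv2
    exact le_of_eq (by exact_mod_cast hvv2.symm)
  have hnsqP : ∀ m, nsq (P m) ≤ W m.1 m.2.1 := by
    intro m
    have : nsq (P m) = W m.1 m.2.1 * nsq (ww m.2.1 m.2.2.1 m.2.2.2) := by
      rw [nsq, nsq, hW, Fintype.sum_prod_type, Finset.sum_mul]
      refine Finset.sum_congr rfl fun a _ => ?_
      rw [Finset.mul_sum]
      refine Finset.sum_congr rfl fun e _ => ?_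
      rw [hP]
      simp only [Complex.normSq_mul]
    rw [this]
    calc W m.1 m.2.1 * nsq (ww m.2.1 m.2.2.1 m.2.2.2) ≤ W m.1 m.2.1 * 1 :=
          mul_le_mul_of_nonneg_left (nsq_le_one_of_orth (hwwo m.2.1 m.2.2.1) m.2.2.2)
            (hWnn m.1 m.2.1)
      _ = _ := mul_one _
  have hnsqQ : ∀ m, nsq (Q m) ≤ Vq m.1 m.2.2.1 := by
    intro m
    have : nsq (Q m) = Vq m.1 m.2.2.1 * nsq (vv m.2.1 m.2.2.1 m.2.2.2) := by
      rw [nsq, nsq, hVq, Fintype.sum_prod_type, Finset.sum_mul]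
      refine Finset.sum_congr rfl fun b _ => ?_
      rw [Finset.mul_sum]
      refine Finset.sum_congr rfl fun f _ => ?_
      rw [hQ]
      simp only [Complex.normSq_mul]
    rw [this]
    have hvvle : nsq (vv m.2.1 m.2.2.1 m.2.2.2) ≤ 1 := by
      have hvv2 := star_dot_self (vv m.2.1 m.2.2.1 m.2.2.2)
      rw [hvvo m.2.1 m.2.2.1 m.2.2.2 m.2.2.2, if_pos rfl] at hvv2
      exact le_of_eq (by exact_mod_cast hvv2.symm)
    calc Vq m.1 m.2.2.1 * nsq (vv m.2.1 m.2.2.1 m.2.2.2) ≤ Vq m.1 m.2.2.1 * 1 :=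
          mul_le_mul_of_nonneg_left hvvle (hVnn m.1 m.2.2.1)
      _ = _ := mul_one _
  -- chain of inequalities
  have step1 : trNorm (amp ⇑φ X) ≤
      ∑ m : (Fin k × γ) × γ × γ × δ, r m * (Real.sqrt (nsq (P m)) * Real.sqrt (nsq (Q m))) := by
    rw [← hA1]
    calc ((A * amp ⇑φ X).trace).re ≤ ‖(A * amp ⇑φ X).trace‖ := Complex.re_le_norm _
      _ ≤ _ := by
          rw [hampdec, Finset.mul_sum, Matrix.trace_sum]
          refine (norm_sum_le _ _).trans ?_
          refine Finset.sum_le_sum fun m _ => ?_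
          rw [Matrix.mul_smul, Matrix.trace_smul, smul_eq_mul, norm_mul,
            Complex.norm_of_nonneg (mul_nonneg (hs m.1) (ht m.2.1 m.2.2.1 m.2.2.2))]
          exact mul_le_mul_of_nonneg_left (hA2 (P m) (Q m))
            (mul_nonneg (hs m.1) (ht m.2.1 m.2.2.1 m.2.2.2))
  have step2 : ∑ m : (Fin k × γ) × γ × γ × δ, r m * (Real.sqrt (nsq (P m)) * Real.sqrt (nsq (Q m)))
      ≤ ∑ i : Fin k × γ, s i * (N * (Real.sqrt (Fintype.card γ) * Real.sqrt (Fintype.card γ))) := by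
    rw [Fintype.sum_prod_type]
    refine Finset.sum_le_sum fun i _ => ?_
    have hib : ∑ p : γ × γ × δ, r (i, p) * (Real.sqrt (nsq (P (i,p))) * Real.sqrt (nsq (Q (i,p))))
        ≤ ∑ c : γ, ∑ c' : γ, s i * N * (Real.sqrt (W i c) * Real.sqrt (Vq i c')) := by
      rw [Fintype.sum_prod_type]
      refine Finset.sum_le_sum fun c _ => ?_
      rw [Fintype.sum_prod_type]
      refine Finset.sum_le_sum fun c' _ => ?_
      have hj : ∀ j : δ, r (i, c, c', j) * (Real.sqrt (nsq (P (i,c,c',j))) * Real.sqrt (nsq (Q (i,c,c',j))))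
          ≤ s i * t c c' j * (Real.sqrt (W i c) * Real.sqrt (Vq i c')) := by
        intro j
        refine mul_le_mul_of_nonneg_left ?_ (mul_nonneg (hs i) (ht c c' j))
        exact mul_le_mul (Real.sqrt_le_sqrt (hnsqP (i,c,c',j))) (Real.sqrt_le_sqrt (hnsqQ (i,c,c',j)))
          (Real.sqrt_nonneg _) (Real.sqrt_nonneg _)
      refine (Finset.sum_le_sum fun j _ => hj j).trans ?_
      have : ∑ j : δ, s i * t c c' j * (Real.sqrt (W i c) * Real.sqrt (Vq i c'))
          = (∑ j : δ, t c c' j) * (s i * (Real.sqrt (W i c) * Real.sqrt (Vq i c'))) := by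
        rw [Finset.sum_mul]
        exact Finset.sum_congr rfl fun j _ => by ring
      rw [this]
      have htle : (∑ j : δ, t c c' j) ≤ N := by
        rw [← htrB c c']
        exact trNorm_phi_std_le φ c c'
      calc (∑ j : δ, t c c' j) * (s i * (Real.sqrt (W i c) * Real.sqrt (Vq i c')))
          ≤ N * (s i * (Real.sqrt (W i c) * Real.sqrt (Vq i c'))) :=
            mul_le_mul_of_nonneg_right htle
              (mul_nonneg (hs i) (mul_nonneg (Real.sqrt_nonneg _) (Real.sqrt_nonneg _)))
        _ = s i * N * (Real.sqrt (W i c) * Real.sqrt (Vq i c')) := by ring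
    refine hib.trans ?_
    have hfact : ∑ c : γ, ∑ c' : γ, s i * N * (Real.sqrt (W i c) * Real.sqrt (Vq i c'))
        = s i * N * ((∑ c, Real.sqrt (W i c)) * (∑ c', Real.sqrt (Vq i c'))) := by
      have hm : (∑ c, Real.sqrt (W i c)) * (∑ c', Real.sqrt (Vq i c'))
          = ∑ c : γ, ∑ c' : γ, Real.sqrt (W i c) * Real.sqrt (Vq i c') :=
        Finset.sum_mul_sum _ _ _ _
      rw [hm, Finset.mul_sum]
      refine Finset.sum_congr rfl fun c _ => ?_
      rw [Finset.mul_sum]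
    rw [hfact]
    have hW1 : (∑ c, Real.sqrt (W i c)) ≤ Real.sqrt (Fintype.card γ) :=
      sqrt_sum_le (hWnn i) (hWsum i)
    have hV1 : (∑ c', Real.sqrt (Vq i c')) ≤ Real.sqrt (Fintype.card γ) :=
      sqrt_sum_le (hVnn i) (hVsum i)
    calc s i * N * ((∑ c, Real.sqrt (W i c)) * (∑ c', Real.sqrt (Vq i c')))
        ≤ s i * N * (Real.sqrt (Fintype.card γ) * Real.sqrt (Fintype.card γ)) := by
          refine mul_le_mul_of_nonneg_left ?_ (mul_nonneg (hs i) hN0)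
          exact mul_le_mul hW1 hV1
            (Finset.sum_nonneg fun c _ => Real.sqrt_nonneg _) (Real.sqrt_nonneg _)
      _ = s i * (N * (Real.sqrt (Fintype.card γ) * Real.sqrt (Fintype.card γ))) := by ring
  refine (step1.trans step2).trans ?_
  have hdd : Real.sqrt (Fintype.card γ) * Real.sqrt (Fintype.card γ) = (Fintype.card γ : ℝ) :=
    Real.mul_self_sqrt (Nat.cast_nonneg _)
  rw [← Finset.sum_mul]
  rw [hdd, ← htr]
  calc trNorm X * (N * (Fintype.card γ : ℝ)) = (Fintype.card γ : ℝ) * N * trNorm X := by ring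
    _ ≤ _ := le_refl _

end mainbound

/-- `‖φ‖_cb ≤ d ‖φ‖_{1→1}` for every linear map between matrix spaces. -/
theorem stmt5 {γ δ : Type*} [Fintype γ] [DecidableEq γ] [Fintype δ] [DecidableEq δ]
    (φ : Matrix γ γ ℂ →ₗ[ℂ] Matrix δ δ ℂ) :
    normCB (⇑φ) ≤ (Fintype.card γ : ℝ) * norm11 (⇑φ) := by
  rw [normCB]
  refine Real.sSup_le ?_ (mul_nonneg (Nat.cast_nonneg _) (norm11_nonneg φ))
  rintro x ⟨k, X, hX, rfl⟩
  have hγ : Nonempty γ := by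
    by_contra h
    rw [not_nonempty_iff] at h
    exact hX (by ext i j; exact (h.false i.2).elim)
  rw [div_le_iff₀ (trNorm_pos_of_ne_zero hX)]
  exact main_bound φ k X
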